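/- Let n ≥ 1, let M ∈ ℝ^{n×n} be a row-stochastic matrix, let K ⊆ {1,…,n} be a nonempty proper subset of 'secret' states with indicator vector s ∈ {0,1}ⁿ, and let ε > 0. Then the following are equivalent: (i) for every probability vector b₀ ∈ Δⁿ with b₀(K) ≤ ε, the beliefs b_t = (Mᵀ)^t b₀ satisfy b_t(K) ≤ ε for all t ≥ 0; (ii) there exist a scalar z ≥ 0 and a vector β ∈ ℝⁿ with β ≥ 0 componentwise such that for every index j, −ε·z + z·s(j) − Σ_{i∈K} M(j,i) − β(j) ≥ −ε (equivalently, Σ_{i∈K} M(j,i) ≤ ε(1−z) + z·s(j) for every j). -/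

import Mathlib

open Matrix BigOperators

/-- A probability vector: nonnegative entries summing to 1. -/
def IsProbVec {n : ℕ} (b : Fin n → ℝ) : Prop :=
  (∀ i, 0 ≤ b i) ∧ ∑ i, b i = 1

/-- A row-stochastic matrix: nonnegative entries, each row sums to 1. -/
def RowStochastic {n : ℕ} (M : Matrix (Fin n) (Fin n) ℝ) : Prop :=
  (∀ i j, 0 ≤ M i j) ∧ ∀ i, ∑ j, M i j = 1

lemma step_sum {n : ℕ} (M : Matrix (Fin n) (Fin n) ℝ) (b : Fin n → ℝ)
    (K : Finset (Fin n)) :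
    ∑ i ∈ K, (Mᵀ *ᵥ b) i = ∑ j, b j * ∑ i ∈ K, M j i := by
  simp only [mulVec, dotProduct, transpose_apply]
  rw [Finset.sum_comm]
  refine Finset.sum_congr rfl fun j _ => ?_
  rw [Finset.mul_sum]
  exact Finset.sum_congr rfl fun i _ => mul_comm _ _

theorem eps_privacy_iff_dual_certificate
    {n : ℕ} (hn : 1 ≤ n) (M : Matrix (Fin n) (Fin n) ℝ) (hM : RowStochastic M)
    (K : Finset (Fin n)) (hKne : K.Nonempty) (hKproper : K ≠ Finset.univ)
    (ε : ℝ) (hε : 0 < ε)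
    (s : Fin n → ℝ) (hs : ∀ j, s j = if j ∈ K then 1 else 0) :
    (∀ b₀ : Fin n → ℝ, IsProbVec b₀ → ∑ i ∈ K, b₀ i ≤ ε →
      ∀ t : ℕ, ∑ i ∈ K, ((Mᵀ ^ t) *ᵥ b₀) i ≤ ε) ↔
    (∃ (z : ℝ) (β : Fin n → ℝ), 0 ≤ z ∧ (∀ j, 0 ≤ β j) ∧
      ∀ j, -ε * z + z * s j - (∑ i ∈ K, M j i) - β j ≥ -ε) := by
  obtain ⟨hMnn, hMrow⟩ := hM
  set c : Fin n → ℝ := fun j => ∑ i ∈ K, M j i with hc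
  have hcnn : ∀ j, 0 ≤ c j := fun j => Finset.sum_nonneg fun i _ => hMnn j i
  have hc1 : ∀ j, c j ≤ 1 := by
    intro j
    rw [← hMrow j]
    exact Finset.sum_le_sum_of_subset_of_nonneg (Finset.subset_univ K)
      (fun i _ _ => hMnn j i)
  constructor
  · intro h
    -- single-vertex tests: for k ∉ K, c k ≤ ε
    have htest0 : ∀ k, k ∉ K → c k ≤ ε := by
      intro k hk
      have hb : IsProbVec (fun i => if i = k then (1:ℝ) else 0) := by
        constructor
        · intro i; positivity
        · simp
      have hbK : ∑ i ∈ K, (if i = k then (1:ℝ) else 0) ≤ ε := by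
        rw [Finset.sum_ite_eq' K k]
        simp [hk]
        exact hε.le
      have := h _ hb hbK 1
      rw [pow_one, step_sum] at this
      simpa [Finset.sum_ite_eq'] using this
    by_cases hε1 : (1:ℝ) ≤ ε
    · refine ⟨0, fun j => ε - c j, le_refl 0, fun j => ?_, fun j => ?_⟩
      · have := hc1 j; simp only [sub_nonneg]; linarith
      · simp only [← hc]; ring_nf; linarith [show c j = ∑ i ∈ K, M j i from rfl]
    · push_neg at hε1
      have hKc : Kᶜ.Nonempty := Finset.nonempty_iff_ne_empty.mpr
        (fun h => hKproper ((Finset.compl_eq_empty_iff K).mp h))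
      obtain ⟨k0, hk0mem, hk0max⟩ := Kᶜ.exists_max_image c hKc
      have hk0K : k0 ∉ K := Finset.mem_compl.mp hk0mem
      have hαε : c k0 ≤ ε := htest0 k0 hk0K
      set z : ℝ := (ε - c k0) / ε with hz
      have hznn : 0 ≤ z := div_nonneg (by linarith) hε.le
      -- pair tests: for j ∈ K, ε * c j + (1-ε) * c k0 ≤ ε
      have htest1 : ∀ j ∈ K, ε * c j + (1 - ε) * c k0 ≤ ε := by
        intro j hj
        have hjk0 : j ≠ k0 := fun h => hk0K (h ▸ hj)
        set b : Fin n → ℝ :=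
          fun i => (if i = j then ε else 0) + (if i = k0 then 1 - ε else 0) with hb
        have hbp : IsProbVec b := by
          constructor
          · intro i
            have : (0:ℝ) ≤ 1 - ε := by linarith
            simp only [hb]; positivity
          · simp [hb, Finset.sum_add_distrib, Finset.sum_ite_eq']
        have hbK : ∑ i ∈ K, b i ≤ ε := by
          simp [hb, Finset.sum_add_distrib, Finset.sum_ite_eq', hj, hk0K]
        have := h b hbp hbK 1
        rw [pow_one, step_sum] at this
        have hev : ∑ i, b i * c i = ε * c j + (1 - ε) * c k0 := by
          simp [hb, add_mul, ite_mul, zero_mul, Finset.sum_add_distrib,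
            Finset.sum_ite_eq']
        rw [hev] at this
        exact this
      refine ⟨z, fun j => ε * (1 - z) + z * s j - c j, hznn, fun j => ?_, fun j => ?_⟩
      · show 0 ≤ ε * (1 - z) + z * s j - c j
        by_cases hj : j ∈ K
        · have h1 := htest1 j hj
          rw [hs j, if_pos hj]
          have h2 : ε * (ε * (1 - z) + z * 1 - c j)
              = ε - (1 - ε) * c k0 - ε * c j := by
            rw [hz]; field_simp; ring
          nlinarith [h1, hε, h2]
        · have h1 := hk0max j (Finset.mem_compl.mpr hj)
          rw [hs j, if_neg hj, hz]
          have : ε * (1 - (ε - c k0) / ε) = c k0 := by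
            field_simp; ring
          rw [this]
          simpa using h1
      · simp only [← hc]; ring_nf; linarith [show c j = ∑ i ∈ K, M j i from rfl]
  · rintro ⟨z, β, hz, hβ, hineq⟩
    have hkey : ∀ j, c j ≤ ε * (1 - z) + z * s j := by
      intro j
      have h1 := hineq j
      have h2 := hβ j
      have h3 : c j = ∑ i ∈ K, M j i := rfl
      nlinarith
    -- one step preserves everything
    have hstep : ∀ b : Fin n → ℝ, IsProbVec b → ∑ i ∈ K, b i ≤ ε →
        IsProbVec (Mᵀ *ᵥ b) ∧ ∑ i ∈ K, (Mᵀ *ᵥ b) i ≤ ε := by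
      intro b ⟨hbnn, hbsum⟩ hbK
      have hsK : ∑ j, b j * s j = ∑ i ∈ K, b i := by
        rw [← Finset.sum_subset (Finset.subset_univ K)
          (f := fun j => b j * s j)]
        · exact Finset.sum_congr rfl fun j hj => by rw [hs j, if_pos hj, mul_one]
        · intro j _ hj; rw [hs j, if_neg hj, mul_zero]
      refine ⟨⟨fun i => ?_, ?_⟩, ?_⟩
      · simp only [mulVec, dotProduct, transpose_apply]
        exact Finset.sum_nonneg fun j _ => mul_nonneg (hMnn j i) (hbnn j)
      · have : ∑ i, (Mᵀ *ᵥ b) i = ∑ j, b j * ∑ i, M j i := step_sum M b Finset.univ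
        rw [this]
        simp only [hMrow, mul_one]
        exact hbsum
      · rw [step_sum]
        calc ∑ j, b j * c j ≤ ∑ j, b j * (ε * (1 - z) + z * s j) := by
              refine Finset.sum_le_sum fun j _ => ?_
              exact mul_le_mul_of_nonneg_left (hkey j) (hbnn j)
          _ = ε * (1 - z) + z * ∑ i ∈ K, b i := by
              simp only [mul_add, Finset.sum_add_distrib, ← Finset.sum_mul,
                hbsum, one_mul]
              rw [← hsK, Finset.mul_sum]
              congr 1
              exact Finset.sum_congr rfl fun j _ => by ring
          _ ≤ ε * (1 - z) + z * ε := by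
              have := mul_le_mul_of_nonneg_left hbK hz; linarith
          _ = ε := by ring
    intro b₀ hb₀ hb₀K t
    induction t generalizing b₀ with
    | zero => simpa using hb₀K
    | succ t ih =>
        have h1 := hstep b₀ hb₀ hb₀K
        have h2 : (Mᵀ ^ (t + 1)) *ᵥ b₀ = (Mᵀ ^ t) *ᵥ (Mᵀ *ᵥ b₀) := by
          rw [pow_succ, ← mulVec_mulVec]
        rw [h2]
        exact ih _ h1.1 h1.2
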